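/- Given real numbers f0, f1, f2 with f0 > 0 and f1² > f2·f0, let p ≥ 1 be an integer with p·(f1² − f2·f0) > 2·f2·f0, and let ε ≠ 0. With μ₁ = μ₂ ∈ ℝ^p, C₁ = I_p and C₂ = (1 + ε/√p) I_p, the quantity Δm = −(2 f1/f0) ‖μ₁ − μ₂‖² + (f2/f0 − f1²/f0²)((tr C₁ − tr C₂)/√p)² + (2 f2/f0) tr((C₁ − C₂)²)/p equals ε²·((f2·f0 − f1²)/f0² + 2 f2/(f0·p)) and is strictly negative. -/

import Mathlib

open Matrix

/-- Necessity of the condition `f''(τ)f(τ) > f'(τ)²`: on the large dimensional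
"concentric spheres" task (`μ₁ = μ₂`, `C₁ = I`, `C₂ = (1 + ε/√p) I`), a kernel with
`f'(τ)² > f''(τ)f(τ)` (and `p(f'(τ)² − f''(τ)f(τ)) > 2 f''(τ)f(τ)`) yields a strictly
negative discrimination quantity `Δm = ε²((f2 f0 − f1²)/f0² + 2 f2/(f0 p))`. -/
theorem delta_m_negative_concentric_spheres
    (f0 f1 f2 : ℝ) (hf0 : 0 < f0) (hcond : f2 * f0 < f1 ^ 2)
    (p : ℕ) (hp : 1 ≤ p) (hpcond : 2 * f2 * f0 < (p : ℝ) * (f1 ^ 2 - f2 * f0))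
    (ε : ℝ) (hε : ε ≠ 0)
    (μ₁ μ₂ : EuclideanSpace ℝ (Fin p)) (hμ : μ₁ = μ₂)
    (C₁ C₂ : Matrix (Fin p) (Fin p) ℝ)
    (hC₁ : C₁ = (1 : Matrix (Fin p) (Fin p) ℝ))
    (hC₂ : C₂ = (1 + ε / Real.sqrt p) • (1 : Matrix (Fin p) (Fin p) ℝ))
    (Δm : ℝ)
    (hΔm : Δm = -(2 * f1 / f0) * ‖μ₁ - μ₂‖ ^ 2
        + (f2 / f0 - f1 ^ 2 / f0 ^ 2) * ((C₁.trace - C₂.trace) / Real.sqrt p) ^ 2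
        + (2 * f2 / f0) * ((C₁ - C₂) * (C₁ - C₂)).trace / p) :
    Δm = ε ^ 2 * ((f2 * f0 - f1 ^ 2) / f0 ^ 2 + 2 * f2 / (f0 * p)) ∧ Δm < 0 := by
  have hpR : (0:ℝ) < p := by exact_mod_cast Nat.lt_of_lt_of_le Nat.zero_lt_one hp
  have hs : (0:ℝ) < Real.sqrt p := Real.sqrt_pos.mpr hpR
  have hs2 : Real.sqrt p * Real.sqrt p = p := Real.mul_self_sqrt hpR.le
  subst hμ hC₁ hC₂
  have hdiff : ((1 : Matrix (Fin p) (Fin p) ℝ) - (1 + ε / Real.sqrt p) • 1) =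
      (-(ε / Real.sqrt p)) • (1 : Matrix (Fin p) (Fin p) ℝ) := by
    ext i j
    simp [Matrix.one_apply]
    split <;> ring
  rw [hdiff] at hΔm
  have htr : ((((-(ε / Real.sqrt p)) • (1 : Matrix (Fin p) (Fin p) ℝ)) *
      ((-(ε / Real.sqrt p)) • 1)).trace) = ε ^ 2 / p * p := by
    rw [Matrix.smul_mul, Matrix.mul_smul, Matrix.one_mul, smul_smul, trace_smul, trace_one]
    field_simp
    ring_nf
    simp only [Fintype.card_fin, inv_pow, Real.sq_sqrt hpR.le]
    field_simp
  have htr1 : (1 : Matrix (Fin p) (Fin p) ℝ).trace = (p:ℝ) := by simp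
  rw [htr, htr1, trace_smul, htr1] at hΔm
  have hΔm' : Δm = ε ^ 2 * ((f2 * f0 - f1 ^ 2) / f0 ^ 2 + 2 * f2 / (f0 * p)) := by
    rw [hΔm]
    simp only [sub_self, norm_zero]
    have : ((p:ℝ) - (1 + ε / Real.sqrt p) * p) / Real.sqrt p = -ε := by
      field_simp
      nlinarith [hs2, congrArg (ε * ·) hs2]
    rw [smul_eq_mul, this]
    field_simp
    ring
  refine ⟨hΔm', ?_⟩
  rw [hΔm']
  have hε2 : 0 < ε ^ 2 := by positivity
  have : (f2 * f0 - f1 ^ 2) / f0 ^ 2 + 2 * f2 / (f0 * p) < 0 := by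
    rw [div_add_div _ _ (by positivity) (by positivity : f0 * (p:ℝ) ≠ 0)]
    apply div_neg_of_neg_of_pos _ (by positivity)
    nlinarith
  nlinarith
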